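/- arXiv:2510.24713 — 3 statements merged into one kernel-verified Lean document; each statement's English description precedes it below -/
import Mathlib

section
/- Let N ≥ 2, let X ⊊ {1,…,N} be a proper subset, and let g be a linear operator on the N-qubit Hilbert space supported on X (i.e., g = g_X ⊗ Id_{X^c} for some operator g_X on H_X). If g|W⟩ = λ|W⟩ for some λ ∈ ℂ, then g|0̄⟩ = λ|0̄⟩ (equivalently g_X|0̄⟩_X = λ|0̄⟩_X) and moreover g_X|W⟩_X = λ|W⟩_X. -/
open scoped BigOperators

noncomputable section

/-- Configurations of `N` qubits. -/
abbrev Cfg (N : ℕ) := Fin N → Fin 2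

/-- The `N`-qubit Hilbert space `⊗_{j=1}^N ℂ²`, identified with `ℂ^(Fin N → Fin 2)`. -/
abbrev QS (N : ℕ) := EuclideanSpace ℂ (Cfg N)

/-- Computational basis state `|t⟩`. -/
def ket {N : ℕ} (t : Cfg N) : QS N := EuclideanSpace.single t 1

/-- Configuration with a single `1` at site `j`. -/
def eConf {N : ℕ} (j : Fin N) : Cfg N := fun k => if k = j then 1 else 0

/-- The all-zero product state `|0̄⟩`. -/
def zeroKet (N : ℕ) : QS N := ket (fun _ => 0)

/-- The W state `|W⟩ = (1/√N) ∑_j |e_j⟩`. -/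
def Wst (N : ℕ) : QS N := (Real.sqrt N : ℂ)⁻¹ • ∑ j : Fin N, ket (eConf j)

/-- Hilbert space of the qubits in a subregion `A ⊆ {1,…,N}`. -/
abbrev QSOn {N : ℕ} (A : Finset (Fin N)) := EuclideanSpace ℂ (↥A → Fin 2)

/-- Computational basis state on subregion `A`. -/
def ketOn {N : ℕ} (A : Finset (Fin N)) (t : ↥A → Fin 2) : QSOn A := EuclideanSpace.single t 1

/-- All-zero state `|0̄⟩_A` on subregion `A`. -/
def zeroOn {N : ℕ} (A : Finset (Fin N)) : QSOn A := ketOn A (fun _ => 0)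

/-- W state `|W⟩_A = (1/√|A|) ∑_{j∈A} |e_j⟩_A` on subregion `A`. -/
def WOn {N : ℕ} (A : Finset (Fin N)) : QSOn A :=
  (Real.sqrt A.card : ℂ)⁻¹ • ∑ j : ↥A, ketOn A (fun k => if k = j then 1 else 0)

/-- Tensor product of a state on `X` with a state on `Xᶜ`, realized in the full `N`-qubit
space via the factorization of basis configurations. -/
def tens {N : ℕ} (X : Finset (Fin N)) (f : QSOn X) (g : QSOn Xᶜ) : QS N :=
  WithLp.toLp 2 (fun s => f (fun j => s j.1) * g (fun j => s j.1))

/-- Combine a configuration on `X` and one on `Xᶜ` into a full configuration. -/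
def mergeCfg {N : ℕ} (X : Finset (Fin N)) (x : ↥X → Fin 2) (y : ↥(Xᶜ) → Fin 2) : Cfg N :=
  fun k => if h : k ∈ X then x ⟨k, h⟩ else y ⟨k, Finset.mem_compl.mpr h⟩

-- helpers
lemma sumApply {ι κ : Type*} [Fintype ι] [Fintype κ] (f : ι → EuclideanSpace ℂ κ) (k : κ) :
    (∑ j, f j) k = ∑ j, f j k := by
  rw [WithLp.ofLp_sum]; exact Finset.sum_apply k Finset.univ _

lemma smulApply {κ : Type*} [Fintype κ] (c : ℂ) (v : EuclideanSpace ℂ κ) (k : κ) :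
    (c • v) k = c * v k := rfl

variable {N : ℕ} (X : Finset (Fin N))

def eX (j : Fin N) : ↥X → Fin 2 := fun k => if (k : Fin N) = j then 1 else 0
def eXc (j : Fin N) : ↥(Xᶜ) → Fin 2 := fun k => if (k : Fin N) = j then 1 else 0

lemma restrictL (x : ↥X → Fin 2) (y : ↥(Xᶜ) → Fin 2) :
    (fun j : ↥X => mergeCfg X x y j.1) = x :=
  funext fun j => by simp [mergeCfg, j.2]

lemma restrictR (x : ↥X → Fin 2) (y : ↥(Xᶜ) → Fin 2) :
    (fun j : ↥(Xᶜ) => mergeCfg X x y j.1) = y :=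
  funext fun j => by
    have hj : (j : Fin N) ∉ X := Finset.mem_compl.mp j.2
    simp [mergeCfg, hj]

lemma merge_eq_iff (x x' : ↥X → Fin 2) (y y' : ↥(Xᶜ) → Fin 2) :
    mergeCfg X x y = mergeCfg X x' y' ↔ x = x' ∧ y = y' := by
  constructor
  · intro h
    constructor
    · rw [← restrictL X x y, h, restrictL]
    · rw [← restrictR X x y, h, restrictR]
  · rintro ⟨rfl, rfl⟩; rfl

lemma eConf_merge (j : Fin N) : eConf j = mergeCfg X (eX X j) (eXc X j) :=
  funext fun k => by by_cases h : k ∈ X <;> simp [eConf, mergeCfg, eX, eXc, h]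

lemma zero_merge : (fun _ => 0 : Cfg N) = mergeCfg X (fun _ => 0) (fun _ => 0) :=
  funext fun k => by by_cases h : k ∈ X <;> simp [mergeCfg, h]

lemma merge_self (s : Cfg N) :
    mergeCfg X (fun j : ↥X => s j.1) (fun j : ↥(Xᶜ) => s j.1) = s :=
  funext fun k => by by_cases h : k ∈ X <;> simp [mergeCfg, h]

lemma eX_of_not_mem {j : Fin N} (hj : j ∉ X) : eX X j = fun _ => 0 :=
  funext fun k => by
    have : (k : Fin N) ≠ j := fun h => hj (h ▸ k.2)
    simp [eX, this]

lemma eXc_of_mem {j : Fin N} (hj : j ∈ X) : eXc X j = fun _ => 0 :=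
  funext fun k => by
    have : (k : Fin N) ≠ j := fun h => (Finset.mem_compl.mp k.2) (h ▸ hj)
    simp [eXc, this]

lemma eXc_ne_zero {j : Fin N} (hj : j ∉ X) : eXc X j ≠ fun _ => 0 := by
  intro h
  have := congrFun h ⟨j, Finset.mem_compl.mpr hj⟩
  simp [eXc] at this

lemma eXc_eq_iff {j0 j : Fin N} (hj0 : j0 ∉ X) : eXc X j0 = eXc X j ↔ j = j0 := by
  constructor
  · intro h
    have := congrFun h ⟨j0, Finset.mem_compl.mpr hj0⟩
    simp [eXc] at this
    by_contra hne
    exact hne this.symm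
  · rintro rfl; rfl

lemma Wst_merge (x : ↥X → Fin 2) (y : ↥(Xᶜ) → Fin 2) :
    Wst N (mergeCfg X x y)
      = (Real.sqrt N : ℂ)⁻¹ *
        ∑ j : Fin N, ((if x = eX X j then (1:ℂ) else 0) * (if y = eXc X j then 1 else 0)) := by
  rw [Wst, smulApply, sumApply]
  congr 1
  refine Finset.sum_congr rfl fun j _ => ?_
  rw [ket]
  rw [EuclideanSpace.single_apply]
  rw [eConf_merge X j]
  by_cases h1 : x = eX X j <;> by_cases h2 : y = eXc X j <;>
    simp [merge_eq_iff, h1, h2]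

lemma zeroOn_apply (x : ↥X → Fin 2) :
    zeroOn X x = if x = (fun _ => 0) then (1:ℂ) else 0 := by
  rw [zeroOn, ketOn, EuclideanSpace.single_apply]

def SX : QSOn X := ∑ j : ↥X, ketOn X (fun k => if k = j then 1 else 0)

lemma SX_apply (x : ↥X → Fin 2) :
    SX X x = ∑ j ∈ X, if x = eX X j then (1:ℂ) else 0 := by
  rw [SX, sumApply, ← Finset.sum_coe_sort X (fun j => if x = eX X j then (1:ℂ) else 0)]
  refine Finset.sum_congr rfl fun j _ => ?_
  rw [ketOn, EuclideanSpace.single_apply]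
  congr 1
  have : (fun k => if k = j then (1:Fin 2) else 0) = eX X j.1 := by
    funext k; simp only [eX, Subtype.ext_iff]
  rw [this]

lemma WOn_eq : WOn X = (Real.sqrt X.card : ℂ)⁻¹ • SX X := rfl

lemma Wst_merge_zero (x : ↥X → Fin 2) :
    Wst N (mergeCfg X x (fun _ => 0)) = (Real.sqrt N : ℂ)⁻¹ * SX X x := by
  rw [Wst_merge, SX_apply]
  congr 1
  have key : ∀ j : Fin N,
      ((if x = eX X j then (1:ℂ) else 0) * (if (fun _ => 0) = eXc X j then 1 else 0))
        = if j ∈ X then (if x = eX X j then (1:ℂ) else 0) else 0 := by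
    intro j
    by_cases h : j ∈ X
    · rw [if_pos h, eXc_of_mem X h, if_pos rfl, mul_one]
    · have h2 : ¬ ((fun _ => 0 : ↥(Xᶜ) → Fin 2) = eXc X j) := fun hc => eXc_ne_zero X h hc.symm
      rw [if_neg h, if_neg h2, mul_zero]
  rw [Finset.sum_congr rfl (fun j _ => key j), Finset.sum_ite_mem, Finset.univ_inter]

lemma Wst_merge_eXc (x : ↥X → Fin 2) {j0 : Fin N} (hj0 : j0 ∉ X) :
    Wst N (mergeCfg X x (eXc X j0))
      = (Real.sqrt N : ℂ)⁻¹ * (if x = (fun _ => 0) then 1 else 0) := by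
  rw [Wst_merge]
  congr 1
  have : ∀ j : Fin N,
      ((if x = eX X j then (1:ℂ) else 0) * (if eXc X j0 = eXc X j then 1 else 0))
        = if j = j0 then (if x = (fun _ => 0) then 1 else 0) else 0 := by
    intro j
    by_cases h : j = j0
    · subst h
      rw [if_pos rfl, if_pos rfl, eX_of_not_mem X hj0, mul_one]
    · rw [if_neg h, if_neg (fun hc => h ((eXc_eq_iff X hj0).mp hc)), mul_zero]
  rw [Finset.sum_congr rfl (fun j _ => this j), Finset.sum_ite_eq' Finset.univ j0,
    if_pos (Finset.mem_univ j0)]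


/-- If a linear operator `g = gX ⊗ Id_{Xᶜ}` supported on a proper subset
`X ⊊ {1,…,N}` satisfies `g|W⟩ = λ|W⟩`, then `g|0̄⟩ = λ|0̄⟩` (equivalently
`gX |0̄⟩_X = λ|0̄⟩_X`) and moreover `gX |W⟩_X = λ|W⟩_X`. -/
theorem supported_eigenoperator_of_W (N : ℕ) (hN : 2 ≤ N)
    (X : Finset (Fin N)) (hproper : X ⊂ Finset.univ)
    (g : QS N →ₗ[ℂ] QS N) (gX : QSOn X →ₗ[ℂ] QSOn X)
    (hsupp : ∀ (ψ : QS N) (s : Cfg N),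
      g ψ s
        = gX (WithLp.toLp 2 (fun x : ↥X → Fin 2 => ψ (mergeCfg X x (fun j : ↥(Xᶜ) => s j.1))))
            (fun j : ↥X => s j.1))
    (lam : ℂ) (hW : g (Wst N) = lam • Wst N) :
    g (zeroKet N) = lam • zeroKet N
      ∧ gX (zeroOn X) = lam • zeroOn X
      ∧ gX (WOn X) = lam • WOn X := by
  obtain ⟨j0, -, hj0⟩ := Finset.exists_of_ssubset hproper
  have hNpos : (0:ℝ) < (N:ℝ) := by
    have : 0 < N := by omega
    exact_mod_cast this
  have hsqrt : ((Real.sqrt N : ℂ))⁻¹ ≠ 0 := by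
    apply inv_ne_zero
    simp only [ne_eq, Complex.ofReal_eq_zero]
    exact ne_of_gt (Real.sqrt_pos.mpr hNpos)
  -- Statement 2
  have h2 : gX (zeroOn X) = lam • zeroOn X := by
    ext x0
    have hs := congrFun (congrArg WithLp.ofLp hW) (mergeCfg X x0 (eXc X j0))
    rw [hsupp (Wst N) (mergeCfg X x0 (eXc X j0))] at hs
    rw [restrictL X x0 (eXc X j0), restrictR X x0 (eXc X j0)] at hs
    have hinner : WithLp.toLp 2 (fun x : ↥X → Fin 2 => Wst N (mergeCfg X x (eXc X j0)))
        = (Real.sqrt N : ℂ)⁻¹ • zeroOn X := by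
      ext x
      simp only [WithLp.ofLp_toLp]
      rw [smulApply, zeroOn_apply, Wst_merge_eXc X x hj0]
    rw [hinner, map_smul, smulApply, smulApply, Wst_merge_eXc X x0 hj0] at hs
    have hs2 : (Real.sqrt N : ℂ)⁻¹ * gX (zeroOn X) x0
        = (Real.sqrt N : ℂ)⁻¹ * (lam * (if x0 = (fun _ => 0) then 1 else 0)) := by
      rw [hs]; ring
    have hs3 := mul_left_cancel₀ hsqrt hs2
    rw [smulApply, zeroOn_apply, hs3]
  -- Statement 3
  have hS : gX (SX X) = lam • SX X := by
    ext x0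
    have hs := congrFun (congrArg WithLp.ofLp hW) (mergeCfg X x0 (fun _ => 0))
    rw [hsupp (Wst N) (mergeCfg X x0 (fun _ => 0))] at hs
    rw [restrictL X x0 (fun _ => 0), restrictR X x0 (fun _ => 0)] at hs
    have hinner : WithLp.toLp 2 (fun x : ↥X → Fin 2 => Wst N (mergeCfg X x (fun _ => 0)))
        = (Real.sqrt N : ℂ)⁻¹ • SX X := by
      ext x
      simp only [WithLp.ofLp_toLp]
      rw [smulApply, Wst_merge_zero]
    rw [hinner, map_smul, smulApply, smulApply, Wst_merge_zero] at hs
    have hs2 : (Real.sqrt N : ℂ)⁻¹ * gX (SX X) x0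
        = (Real.sqrt N : ℂ)⁻¹ * (lam * SX X x0) := by
      rw [hs]; ring
    have hs3 := mul_left_cancel₀ hsqrt hs2
    rw [smulApply, hs3]
  have h3 : gX (WOn X) = lam • WOn X := by
    rw [WOn_eq, map_smul, hS, smul_comm]
  -- Statement 1
  have h1 : g (zeroKet N) = lam • zeroKet N := by
    ext s
    rw [hsupp (zeroKet N) s]
    have hinner : WithLp.toLp 2 (fun x : ↥X → Fin 2 => zeroKet N (mergeCfg X x (fun j : ↥(Xᶜ) => s j.1)))
        = (if (fun j : ↥(Xᶜ) => s j.1) = (fun _ => 0) then (1:ℂ) else 0) • zeroOn X := by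
      ext x
      simp only [WithLp.ofLp_toLp]
      rw [smulApply, zeroOn_apply, zeroKet, ket, EuclideanSpace.single_apply, zero_merge X]
      by_cases hx : x = (fun _ => 0) <;>
        by_cases hy : (fun j : ↥(Xᶜ) => s j.1) = (fun _ => 0) <;>
        simp [merge_eq_iff, hx, hy]
    have hcond : (s = (fun _ => 0 : Cfg N))
        ↔ ((fun j : ↥X => s j.1) = fun _ => 0) ∧ ((fun j : ↥(Xᶜ) => s j.1) = fun _ => 0) := by
      constructor
      · rintro rfl; exact ⟨rfl, rfl⟩
      · rintro ⟨hx, hy⟩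
        funext k
        by_cases h : k ∈ X
        · exact congrFun hx ⟨k, h⟩
        · exact congrFun hy ⟨k, Finset.mem_compl.mpr h⟩
    rw [hinner, map_smul, smulApply, h2, smulApply, zeroOn_apply,
      smulApply, zeroKet, ket, EuclideanSpace.single_apply]
    simp only [hcond]
    by_cases hx : (fun j : ↥X => s j.1) = (fun _ => 0) <;>
      by_cases hy : (fun j : ↥(Xᶜ) => s j.1) = (fun _ => 0) <;>
      simp [hx, hy]
  exact ⟨h1, h2, h3⟩

end
end

section
/- Let N ≥ 2 and let X ⊆ {1,…,N} with 2 ≤ |X| < N. Let h be an operator supported on X with h|0̄⟩_X = 0 and h|W⟩_X = 0 (acting on the region X). Then |⟨W²| h |W²⟩| ≤ ‖h‖ · C(|X|,2)/C(N,2), where |W²⟩ is the two-particle Dicke state on N qubits. -/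
open scoped BigOperators

noncomputable section

/-- Two-particle Dicke state `|W²⟩ = (1/√C(N,2)) ∑_{j<k} s_j† s_k† |0̄⟩`. -/
def W2 (N : ℕ) : QS N :=
  (Real.sqrt (N.choose 2) : ℂ)⁻¹ •
    ∑ p ∈ Finset.univ.filter (fun p : Fin N × Fin N => p.1 < p.2),
      ket (fun k => if k = p.1 ∨ k = p.2 then 1 else 0)

namespace W2aux
variable {N : ℕ}

def restX (X : Finset (Fin N)) (s : Cfg N) : ↥X → Fin 2 := fun j => s j.1
def restXc (X : Finset (Fin N)) (s : Cfg N) : ↥(Xᶜ) → Fin 2 := fun j => s j.1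

lemma restX_merge (X : Finset (Fin N)) (x : ↥X → Fin 2) (y : ↥(Xᶜ) → Fin 2) :
    restX X (mergeCfg X x y) = x := by
  funext j; simp [restX, mergeCfg, j.2]

lemma restXc_merge (X : Finset (Fin N)) (x : ↥X → Fin 2) (y : ↥(Xᶜ) → Fin 2) :
    restXc X (mergeCfg X x y) = y := by
  funext j
  have hj : (j : Fin N) ∉ X := Finset.mem_compl.mp j.2
  simp [restXc, mergeCfg, hj]

lemma merge_rest (X : Finset (Fin N)) (s : Cfg N) :
    mergeCfg X (restX X s) (restXc X s) = s := by
  funext k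
  by_cases hk : k ∈ X <;> simp [mergeCfg, restX, restXc, hk]

def cfgEquiv (X : Finset (Fin N)) : ((↥X → Fin 2) × (↥(Xᶜ) → Fin 2)) ≃ Cfg N where
  toFun p := mergeCfg X p.1 p.2
  invFun s := (restX X s, restXc X s)
  left_inv p := by simp [restX_merge, restXc_merge]
  right_inv s := merge_rest X s

lemma sum_cfg (X : Finset (Fin N)) (φ : Cfg N → ℂ) :
    ∑ s, φ s = ∑ x : ↥X → Fin 2, ∑ y : ↥(Xᶜ) → Fin 2, φ (mergeCfg X x y) := by
  calc ∑ s, φ s = ∑ p : (↥X → Fin 2) × (↥(Xᶜ) → Fin 2), φ (cfgEquiv X p) :=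
        ((cfgEquiv X).sum_comp φ).symm
    _ = _ := Fintype.sum_prod_type _

lemma tens_apply (X : Finset (Fin N)) (f : QSOn X) (g : QSOn Xᶜ) (s : Cfg N) :
    tens X f g s = f (restX X s) * g (restXc X s) := rfl

lemma inner_tens (X : Finset (Fin N)) (f f' : QSOn X) (g g' : QSOn Xᶜ) :
    (inner ℂ (tens X f g) (tens X f' g') : ℂ) = inner ℂ f f' * inner ℂ g g' := by
  simp only [PiLp.inner_apply, RCLike.inner_apply']
  rw [sum_cfg X, Finset.sum_mul_sum]
  refine Finset.sum_congr rfl fun x _ => Finset.sum_congr rfl fun y _ => ?_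
  rw [tens_apply, tens_apply, restX_merge, restXc_merge, map_mul]
  ring

lemma tens_sum_left (X : Finset (Fin N)) {ι : Type*} (T : Finset ι) (F : ι → QSOn X)
    (g : QSOn Xᶜ) : tens X (∑ t ∈ T, F t) g = ∑ t ∈ T, tens X (F t) g := by
  ext s
  rw [WithLp.ofLp_sum, Finset.sum_apply]
  simp only [tens_apply]
  rw [WithLp.ofLp_sum, Finset.sum_apply, Finset.sum_mul]

lemma tens_zero_left (X : Finset (Fin N)) (g : QSOn Xᶜ) : tens X (0 : QSOn X) g = 0 := by
  ext s; simp [tens_apply]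

lemma h_tens (X : Finset (Fin N)) (h : QS N →L[ℂ] QS N) (hX : QSOn X →L[ℂ] QSOn X)
    (hsupp : ∀ (ψ : QS N) (s : Cfg N),
      h ψ s
        = hX (WithLp.toLp 2 (fun x : ↥X → Fin 2 => ψ (mergeCfg X x (fun j : ↥(Xᶜ) => s j.1))))
            (fun j : ↥X => s j.1))
    (f : QSOn X) (g : QSOn Xᶜ) : h (tens X f g) = tens X (hX f) g := by
  ext s
  rw [hsupp (tens X f g) s]
  have e1 : WithLp.toLp 2 (fun x : ↥X → Fin 2 => tens X f g (mergeCfg X x (fun j : ↥(Xᶜ) => s j.1)))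
      = g (restXc X s) • f := by
    ext x
    show tens X f g (mergeCfg X x (fun j : ↥(Xᶜ) => s j.1)) = _
    rw [tens_apply, restX_merge]
    have : restXc X (mergeCfg X x (fun j : ↥(Xᶜ) => s j.1)) = restXc X s :=
      restXc_merge X x _
    rw [this, mul_comm]
    rfl
  rw [e1, map_smul]
  show g (restXc X s) * (hX f) (restX X s) = _
  rw [tens_apply, mul_comm]

lemma ket_tens (X : Finset (Fin N)) (t : Cfg N) :
    ket t = tens X (ketOn X (restX X t)) (ketOn Xᶜ (restXc X t)) := by
  ext s
  have key : s = t ↔ (restX X s = restX X t ∧ restXc X s = restXc X t) := by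
    constructor
    · rintro rfl; exact ⟨rfl, rfl⟩
    · rintro ⟨h1, h2⟩
      funext k
      by_cases hk : k ∈ X
      · exact congrFun h1 ⟨k, hk⟩
      · exact congrFun h2 ⟨k, Finset.mem_compl.mpr hk⟩
  rw [tens_apply]
  show (EuclideanSpace.single t 1 : QS N) s
      = (EuclideanSpace.single (restX X t) 1 : QSOn X) (restX X s)
        * (EuclideanSpace.single (restXc X t) 1 : QSOn Xᶜ) (restXc X s)
  simp only [EuclideanSpace.single_apply]
  by_cases h1 : restX X s = restX X t <;> by_cases h2 : restXc X s = restXc X t <;>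
    simp [key, h1, h2]

def epCfg (p : Fin N × Fin N) : Cfg N := fun k => if k = p.1 ∨ k = p.2 then 1 else 0
def eOn (A : Finset (Fin N)) (i : Fin N) : ↥A → Fin 2 := fun k => if (k : Fin N) = i then 1 else 0

lemma restX_ep_zero (X : Finset (Fin N)) (p : Fin N × Fin N) (h1 : p.1 ∉ X) (h2 : p.2 ∉ X) :
    restX X (epCfg p) = fun _ => 0 := by
  funext j
  have hj := j.2
  have : ¬((j : Fin N) = p.1 ∨ (j : Fin N) = p.2) := by
    rintro (h | h) <;> [exact h1 (h ▸ hj); exact h2 (h ▸ hj)]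
  simp [restX, epCfg, this]

lemma restXc_ep_zero (X : Finset (Fin N)) (p : Fin N × Fin N) (h1 : p.1 ∈ X) (h2 : p.2 ∈ X) :
    restXc X (epCfg p) = fun _ => 0 := by
  funext j
  have hj : (j : Fin N) ∉ X := Finset.mem_compl.mp j.2
  have : ¬((j : Fin N) = p.1 ∨ (j : Fin N) = p.2) := by
    rintro (h | h) <;> [exact (h ▸ hj) h1; exact (h ▸ hj) h2]
  simp [restXc, epCfg, this]

lemma restX_ep_one (X : Finset (Fin N)) (p : Fin N × Fin N) (h1 : p.1 ∈ X) (h2 : p.2 ∉ X) :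
    restX X (epCfg p) = eOn X p.1 := by
  funext j
  have : (j : Fin N) ≠ p.2 := fun h => h2 (h ▸ j.2)
  simp [restX, epCfg, eOn, this]

lemma restX_ep_two (X : Finset (Fin N)) (p : Fin N × Fin N) (h1 : p.1 ∉ X) (h2 : p.2 ∈ X) :
    restX X (epCfg p) = eOn X p.2 := by
  funext j
  have : (j : Fin N) ≠ p.1 := fun h => h1 (h ▸ j.2)
  simp [restX, epCfg, eOn, this]

lemma restXc_ep_one (X : Finset (Fin N)) (p : Fin N × Fin N) (h1 : p.1 ∈ X) (h2 : p.2 ∉ X) :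
    restXc X (epCfg p) = eOn Xᶜ p.2 := by
  funext j
  have : (j : Fin N) ≠ p.1 := fun h => (Finset.mem_compl.mp j.2) (h ▸ h1)
  simp [restXc, epCfg, eOn, this]

lemma restXc_ep_two (X : Finset (Fin N)) (p : Fin N × Fin N) (h1 : p.1 ∉ X) (h2 : p.2 ∈ X) :
    restXc X (epCfg p) = eOn Xᶜ p.1 := by
  funext j
  have : (j : Fin N) ≠ p.2 := fun h => (Finset.mem_compl.mp j.2) (h ▸ h2)
  simp [restXc, epCfg, eOn, this]

lemma restXc_ep_eq_zero_iff (X : Finset (Fin N)) (p : Fin N × Fin N) :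
    restXc X (epCfg p) = (fun _ => 0) ↔ (p.1 ∈ X ∧ p.2 ∈ X) := by
  constructor
  · intro hz
    constructor
    · by_contra h1
      have := congrFun hz ⟨p.1, Finset.mem_compl.mpr h1⟩
      simp [restXc, epCfg] at this
    · by_contra h2
      have := congrFun hz ⟨p.2, Finset.mem_compl.mpr h2⟩
      simp [restXc, epCfg] at this
  · intro ⟨h1, h2⟩; exact restXc_ep_zero X p h1 h2

lemma ep_inj (X : Finset (Fin N)) (p q : Fin N × Fin N)
    (hp : p.1 < p.2) (hq : q.1 < q.2) (hp1 : p.1 ∈ X) (hp2 : p.2 ∈ X)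
    (hq1 : q.1 ∈ X) (hq2 : q.2 ∈ X)
    (heq : restX X (epCfg p) = restX X (epCfg q)) : p = q := by
  have ev : ∀ (k : Fin N) (hk : k ∈ X), ((k = p.1 ∨ k = p.2) ↔ (k = q.1 ∨ k = q.2)) := by
    intro k hk
    have := congrFun heq ⟨k, hk⟩
    simp only [restX, epCfg] at this
    by_cases a : k = p.1 ∨ k = p.2 <;> by_cases b : k = q.1 ∨ k = q.2 <;>
      simp [a, b] at this ⊢
  have e1 := (ev p.1 hp1).mp (Or.inl rfl)
  have e2 := (ev p.2 hp2).mp (Or.inr rfl)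
  have e3 := (ev q.1 hq1).mpr (Or.inl rfl)
  have e4 := (ev q.2 hq2).mpr (Or.inr rfl)
  have : p.1 = q.1 ∧ p.2 = q.2 := by
    simp only [Fin.ext_iff, Fin.lt_def] at *
    omega
  exact Prod.ext this.1 this.2

lemma card_S1 (X : Finset (Fin N)) :
    ((Finset.univ.filter (fun p : Fin N × Fin N => p.1 < p.2)).filter
      (fun p => p.1 ∈ X ∧ p.2 ∈ X)).card = X.card.choose 2 := by
  set A := X.offDiag.filter (fun p => p.1 < p.2) with hA
  have hS1A : (Finset.univ.filter (fun p : Fin N × Fin N => p.1 < p.2)).filter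
      (fun p => p.1 ∈ X ∧ p.2 ∈ X) = A := by
    ext p
    simp only [hA, Finset.mem_filter, Finset.mem_univ, Finset.mem_offDiag, true_and]
    constructor
    · rintro ⟨h1, h2, h3⟩; exact ⟨⟨h2, h3, ne_of_lt h1⟩, h1⟩
    · rintro ⟨⟨h1, h2, _⟩, h4⟩; exact ⟨h4, h1, h2⟩
  rw [hS1A]
  set B := X.offDiag.filter (fun p => ¬ p.1 < p.2) with hB
  have hcardAB : A.card = B.card := by
    apply Finset.card_bij (fun p _ => p.swap)
    · intro p hp
      simp only [hA, hB, Finset.mem_filter, Finset.mem_offDiag] at hp ⊢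
      obtain ⟨⟨h1, h2, h3⟩, h4⟩ := hp
      exact ⟨⟨h2, h1, h3.symm⟩, not_lt.mpr (le_of_lt h4)⟩
    · intro p hp q hq hpq
      exact Prod.swap_injective hpq
    · intro q hq
      refine ⟨q.swap, ?_, by simp⟩
      simp only [hA, hB, Finset.mem_filter, Finset.mem_offDiag] at hq ⊢
      obtain ⟨⟨h1, h2, h3⟩, h4⟩ := hq
      exact ⟨⟨h2, h1, h3.symm⟩, lt_of_le_of_ne (not_lt.mp h4) h3.symm⟩
  have hsum : A.card + B.card = X.offDiag.card :=
    Finset.card_filter_add_card_filter_not _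
  rw [Finset.offDiag_card] at hsum
  have hchoose : X.card.choose 2 = X.card * (X.card - 1) / 2 := Nat.choose_two_right _
  have hm : X.card * (X.card - 1) = X.card * X.card - X.card := by
    cases Nat.eq_zero_or_pos X.card with
    | inl h => simp [h]
    | inr h => have := Nat.mul_sub X.card X.card 1; omega
  omega

end W2aux

open scoped ComplexConjugate

open W2aux in
/-- Let `X` with `2 ≤ |X| < N`, and let `h = hX ⊗ Id_{Xᶜ}` be supported on
`X` with `hX |0̄⟩_X = 0` and `hX |W⟩_X = 0`. Then
`|⟨W²| h |W²⟩| ≤ ‖h‖ · C(|X|,2)/C(N,2)`. -/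
theorem W2_expectation_bound (N : ℕ) (hN : 2 ≤ N) (X : Finset (Fin N))
    (hXcard : 2 ≤ X.card) (hXlt : X.card < N)
    (h : QS N →L[ℂ] QS N) (hX : QSOn X →L[ℂ] QSOn X)
    (hsupp : ∀ (ψ : QS N) (s : Cfg N),
      h ψ s
        = hX (WithLp.toLp 2 (fun x : ↥X → Fin 2 => ψ (mergeCfg X x (fun j : ↥(Xᶜ) => s j.1))))
            (fun j : ↥X => s j.1))
    (h0 : hX (zeroOn X) = 0) (hW : hX (WOn X) = 0) :
    ‖(inner ℂ (W2 N) (h (W2 N)) : ℂ)‖ ≤ ‖h‖ * ((X.card.choose 2 : ℝ) / (N.choose 2 : ℝ)) := by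
  set S : Finset (Fin N × Fin N) := Finset.univ.filter (fun p => p.1 < p.2) with hS
  set S1 : Finset (Fin N × Fin N) := S.filter (fun p => p.1 ∈ X ∧ p.2 ∈ X) with hS1
  set c0 : ℂ := (Real.sqrt (N.choose 2) : ℂ)⁻¹ with hc0
  set u : QSOn X := ∑ p ∈ S1, ketOn X (restX X (epCfg p)) with hu
  have hW2 : W2 N = c0 • ∑ p ∈ S, ket (epCfg p) := rfl
  -- the sum of single-excitation kets on X is a multiple of the W state
  have hsumX : ∑ a ∈ X, ketOn X (eOn X a) = ((Real.sqrt X.card : ℝ) : ℂ) • WOn X := by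
    have hs : ∑ a ∈ X, ketOn X (eOn X a)
        = ∑ j : ↥X, ketOn X (fun k => if k = j then 1 else 0) := by
      rw [← Finset.sum_coe_sort X (fun a => ketOn X (eOn X a))]
      refine Finset.sum_congr rfl fun j _ => ?_
      have : eOn X (↑j) = (fun k : ↥X => if k = j then 1 else 0) := by
        funext k; simp only [eOn, Subtype.ext_iff]
      rw [this]
    rw [hs, WOn, smul_smul, mul_inv_cancel₀, one_smul]
    have hxpos : (0 : ℝ) < (X.card : ℝ) := by
      exact_mod_cast Nat.lt_of_lt_of_le Nat.zero_lt_two hXcard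
    have : (0 : ℝ) < Real.sqrt X.card := Real.sqrt_pos.mpr hxpos
    exact_mod_cast this.ne'
  -- action of h on the basis kets
  have hterm : ∀ p : Fin N × Fin N, h (ket (epCfg p)) =
      tens X (hX (ketOn X (restX X (epCfg p)))) (ketOn Xᶜ (restXc X (epCfg p))) := fun p => by
    rw [ket_tens X (epCfg p), h_tens X h hX hsupp]
  -- the auxiliary one-in-each term
  set F : Fin N × Fin N → QS N :=
    fun q => tens X (hX (ketOn X (eOn X q.1))) (ketOn Xᶜ (eOn Xᶜ q.2)) with hF
  set T : Finset (Fin N × Fin N) := X ×ˢ Xᶜ with hT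
  have hTzero : ∑ q ∈ T, F q = 0 := by
    rw [hT, Finset.sum_product, Finset.sum_comm]
    refine Finset.sum_eq_zero fun b hb => ?_
    have : ∑ a ∈ X, F (a, b)
        = ∑ a ∈ X, tens X (hX (ketOn X (eOn X a))) (ketOn Xᶜ (eOn Xᶜ b)) := rfl
    rw [this, ← tens_sum_left, ← map_sum, hsumX, map_smul, hW, smul_zero, tens_zero_left]
  -- Step A : h |W²⟩ = c0 • (hX u) ⊗ |0̄⟩
  have hA : h (W2 N) = c0 • tens X (hX u) (zeroOn Xᶜ) := by
    rw [hW2, map_smul, map_sum]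
    congr 1
    rw [← Finset.sum_filter_add_sum_filter_not S (fun p => p.1 ∈ X ∧ p.2 ∈ X)
        (fun p => h (ket (epCfg p))), ← hS1]
    have hsum_S1 : ∑ p ∈ S1, h (ket (epCfg p)) = tens X (hX u) (zeroOn Xᶜ) := by
      rw [hu, map_sum, tens_sum_left]
      refine Finset.sum_congr rfl fun p hp => ?_
      rw [hS1, Finset.mem_filter] at hp
      rw [hterm p, restXc_ep_zero X p hp.2.1 hp.2.2]
      rfl
    have hsum_Sr : ∑ p ∈ S.filter (fun p => ¬(p.1 ∈ X ∧ p.2 ∈ X)), h (ket (epCfg p)) = 0 := by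
      set Sr := S.filter (fun p => ¬(p.1 ∈ X ∧ p.2 ∈ X)) with hSr
      rw [← Finset.sum_filter_add_sum_filter_not Sr (fun p => p.1 ∈ X)
          (fun p => h (ket (epCfg p)))]
      -- memberships in Sr pieces
      have memSr : ∀ p : Fin N × Fin N, p ∈ Sr ↔ p.1 < p.2 ∧ ¬(p.1 ∈ X ∧ p.2 ∈ X) := by
        intro p
        rw [hSr, Finset.mem_filter, hS, Finset.mem_filter]
        simp
      have hpart1 : ∑ p ∈ Sr.filter (fun p => p.1 ∈ X), h (ket (epCfg p))
          = ∑ q ∈ T.filter (fun q => q.1 < q.2), F q := by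
        refine Finset.sum_congr ?_ ?_
        · ext p
          rw [Finset.mem_filter, memSr, hT, Finset.mem_filter, Finset.mem_product,
            Finset.mem_compl]
          constructor
          · rintro ⟨⟨hlt, hnb⟩, h1⟩
            exact ⟨⟨h1, fun h2 => hnb ⟨h1, h2⟩⟩, hlt⟩
          · rintro ⟨⟨h1, h2⟩, hlt⟩
            exact ⟨⟨hlt, fun hb => h2 hb.2⟩, h1⟩
        · intro p hp
          rw [Finset.mem_filter, hT, Finset.mem_product, Finset.mem_compl] at hp
          rw [hterm p, hF, restX_ep_one X p hp.1.1 hp.1.2, restXc_ep_one X p hp.1.1 hp.1.2]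
      have hpart2 : ∑ p ∈ Sr.filter (fun p => ¬ p.1 ∈ X), h (ket (epCfg p))
          = ∑ q ∈ T.filter (fun q => ¬ q.1 < q.2), F q := by
        rw [← Finset.sum_filter_add_sum_filter_not (Sr.filter (fun p => ¬ p.1 ∈ X))
            (fun p => p.2 ∈ X) (fun p => h (ket (epCfg p)))]
        have hz : ∑ p ∈ (Sr.filter (fun p => ¬ p.1 ∈ X)).filter (fun p => ¬ p.2 ∈ X),
            h (ket (epCfg p)) = 0 := by
          refine Finset.sum_eq_zero fun p hp => ?_
          rw [Finset.mem_filter, Finset.mem_filter] at hp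
          rw [hterm p, restX_ep_zero X p hp.1.2 hp.2]
          show tens X (hX (zeroOn X)) _ = 0
          rw [h0, tens_zero_left]
        rw [hz, add_zero]
        refine Finset.sum_bij' (fun p _ => p.swap) (fun q _ => q.swap) ?_ ?_ ?_ ?_ ?_
        · intro p hp
          rw [Finset.mem_filter, Finset.mem_filter, memSr] at hp
          rw [Finset.mem_filter, hT, Finset.mem_product, Finset.mem_compl]
          exact ⟨⟨hp.2, hp.1.2⟩, not_lt.mpr (le_of_lt hp.1.1.1)⟩
        · intro q hq
          rw [Finset.mem_filter, hT, Finset.mem_product, Finset.mem_compl] at hq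
          have hne : q.1 ≠ q.2 := by
            intro he; exact hq.1.2 (he ▸ hq.1.1)
          have hlt : q.2 < q.1 := lt_of_le_of_ne (not_lt.mp hq.2) (Ne.symm hne)
          rw [Finset.mem_filter, Finset.mem_filter, memSr]
          exact ⟨⟨⟨hlt, fun hb => hq.1.2 hb.1⟩, fun hx => hq.1.2 hx⟩, hq.1.1⟩
        · intro p _; exact Prod.swap_swap p
        · intro q _; exact Prod.swap_swap q
        · intro p hp
          rw [Finset.mem_filter, Finset.mem_filter, memSr] at hp
          have h2 : p.2 ∈ X := hp.2
          have h1 : p.1 ∉ X := hp.1.2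
          rw [hterm p, hF, restX_ep_two X p h1 h2, restXc_ep_two X p h1 h2]
          simp only [Prod.fst_swap, Prod.snd_swap]
      rw [hpart1, hpart2, Finset.sum_filter_add_sum_filter_not, hTzero]
    rw [hsum_S1, hsum_Sr, add_zero]
  -- Step B : ⟨W², f ⊗ 0̄⟩ = c0 * ⟨u, f⟩
  have hB : ∀ f : QSOn X, (inner ℂ (W2 N) (tens X f (zeroOn Xᶜ)) : ℂ) = c0 * inner ℂ u f := by
    intro f
    rw [hW2, inner_smul_left]
    have hconj : (starRingEnd ℂ) c0 = c0 := by
      rw [hc0, map_inv₀, Complex.conj_ofReal]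
    rw [hconj]
    congr 1
    rw [sum_inner]
    have hterm2 : ∀ p ∈ S, (inner ℂ (ket (epCfg p)) (tens X f (zeroOn Xᶜ)) : ℂ)
        = if p.1 ∈ X ∧ p.2 ∈ X then f (restX X (epCfg p)) else 0 := by
      intro p _
      rw [ket, EuclideanSpace.inner_single_left, map_one, one_mul, tens_apply]
      show f (restX X (epCfg p))
          * (EuclideanSpace.single (fun _ => 0) (1:ℂ)) (restXc X (epCfg p)) = _
      rw [EuclideanSpace.single_apply]
      by_cases hz : restXc X (epCfg p) = (fun _ => 0)
      · rw [if_pos hz, if_pos ((restXc_ep_eq_zero_iff X p).mp hz), mul_one]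
      · rw [if_neg hz, if_neg (fun hb => hz ((restXc_ep_eq_zero_iff X p).mpr hb)), mul_zero]
    rw [Finset.sum_congr rfl hterm2, ← Finset.sum_filter, ← hS1, hu, sum_inner]
    refine Finset.sum_congr rfl fun p hp => ?_
    rw [ketOn, EuclideanSpace.inner_single_left, map_one, one_mul]
  -- Step C/D : assemble
  set v : QS N := tens X u (zeroOn Xᶜ) with hv
  have hvv : h v = tens X (hX u) (zeroOn Xᶜ) := h_tens X h hX hsupp u (zeroOn Xᶜ)
  have hzz : (inner ℂ (zeroOn Xᶜ) (zeroOn Xᶜ) : ℂ) = 1 := by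
    rw [zeroOn, ketOn, EuclideanSpace.inner_single_left, map_one, one_mul,
      EuclideanSpace.single_apply, if_pos rfl]
  have hD : (inner ℂ v (h v) : ℂ) = inner ℂ u (hX u) := by
    rw [hvv, hv, inner_tens, hzz, mul_one]
  have hC : (inner ℂ (W2 N) (h (W2 N)) : ℂ) = c0 ^ 2 * inner ℂ v (h v) := by
    rw [hA, inner_smul_right, hB (hX u), hD]; ring
  -- Step E : ⟨u,u⟩ = C(|X|,2)
  have hE : (inner ℂ u u : ℂ) = ((X.card.choose 2 : ℕ) : ℂ) := by
    rw [hu, sum_inner]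
    have hone : ∀ p ∈ S1,
        (inner ℂ (ketOn X (restX X (epCfg p))) (∑ q ∈ S1, ketOn X (restX X (epCfg q))) : ℂ)
          = 1 := by
      intro p hp
      rw [inner_sum]
      have hval : ∀ q ∈ S1,
          (inner ℂ (ketOn X (restX X (epCfg p))) (ketOn X (restX X (epCfg q))) : ℂ)
            = if q = p then 1 else 0 := by
        intro q hq
        rw [ketOn, ketOn, EuclideanSpace.inner_single_left, map_one, one_mul,
          EuclideanSpace.single_apply]
        rw [hS1, Finset.mem_filter, hS, Finset.mem_filter] at hp hq
        by_cases he : q = p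
        · rw [if_pos (by rw [he]), if_pos he]
        · rw [if_neg ?_, if_neg he]
          intro hre
          exact he (ep_inj X q p hq.1.2 hp.1.2 hq.2.1 hq.2.2 hp.2.1 hp.2.2 hre.symm)
      rw [Finset.sum_congr rfl hval, Finset.sum_ite_eq' S1 p (fun _ => (1:ℂ)), if_pos hp]
    rw [Finset.sum_congr rfl hone, Finset.sum_const, nsmul_eq_mul, mul_one]
    rw [hS1, hS, card_S1]
  -- Step F : norms
  have hCNpos : (0:ℝ) < (N.choose 2 : ℝ) := by exact_mod_cast Nat.choose_pos hN
  have hvnorm : ‖v‖ ^ 2 = ((X.card.choose 2 : ℕ) : ℝ) := by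
    have h1 : (inner ℂ v v : ℂ) = (((X.card.choose 2 : ℕ) : ℝ) : ℂ) := by
      rw [hv, inner_tens, hzz, mul_one, hE]; norm_num
    rw [inner_self_eq_norm_sq_to_K] at h1
    have h2 : ((‖v‖ ^ 2 : ℝ) : ℂ) = (((X.card.choose 2 : ℕ) : ℝ) : ℂ) := by
      push_cast at h1 ⊢; exact h1
    exact_mod_cast h2
  have hc0n : ‖c0 ^ 2‖ = ((N.choose 2 : ℝ))⁻¹ := by
    rw [norm_pow, hc0, norm_inv, Complex.norm_real, Real.norm_eq_abs,
      abs_of_nonneg (Real.sqrt_nonneg _), inv_pow, Real.sq_sqrt hCNpos.le]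
  have hinner_le : ‖(inner ℂ v (h v) : ℂ)‖ ≤ ‖h‖ * ((X.card.choose 2 : ℕ) : ℝ) := by
    calc ‖(inner ℂ v (h v) : ℂ)‖ ≤ ‖v‖ * ‖h v‖ := norm_inner_le_norm v (h v)
      _ ≤ ‖v‖ * (‖h‖ * ‖v‖) := mul_le_mul_of_nonneg_left (h.le_opNorm v) (norm_nonneg v)
      _ = ‖h‖ * (‖v‖ ^ 2) := by ring
      _ = ‖h‖ * ((X.card.choose 2 : ℕ) : ℝ) := by rw [hvnorm]
  rw [hC, norm_mul]
  calc ‖c0 ^ 2‖ * ‖(inner ℂ v (h v) : ℂ)‖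
      ≤ ((N.choose 2 : ℝ))⁻¹ * (‖h‖ * ((X.card.choose 2 : ℕ) : ℝ)) := by
        rw [hc0n]
        exact mul_le_mul_of_nonneg_left hinner_le (inv_nonneg.mpr hCNpos.le)
    _ = ‖h‖ * ((X.card.choose 2 : ℝ) / (N.choose 2 : ℝ)) := by
        push_cast; ring


end
end

section
/- Let N ≥ 2 and let c be a purely imaginary Hermitian N×N hopping matrix (c_{jk} = i a_{jk} with a real antisymmetric) indexed cyclically, with all row sums zero: Σ_k c_{jk} = 0 for all j. For 2 ≤ α, define Q^{j,α} := i(E_{j,j+α} − E_{j+α,j}) − i Σ_{n=1}^{α} (E_{j+n−1,j+n} − E_{j+n,j+n−1}) (indices mod N), each of which is Hermitian with all row sums zero and annihilates the all-ones vector. Then there exists t ∈ ℝ and real coefficients such that c = t·A_NN + Σ_{j,α≥2} c^{(α)}_j Q^{j,α}, where A_NN := (i/2)Σ_{j} (E_{j,j+1} − E_{j+1,j})·2 = i Σ_j (E_{j,j+1} − E_{j+1,j}) is the nearest-neighbor pure-imaginary cyclic hopping matrix. In particular, the quotient of the space of such matrices by the span of {Q^{j,α}} is at most one-dimensional, spanned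 by A_NN. -/
open Matrix
open scoped BigOperators

noncomputable section

/-- Matrix unit `E_{ab}` over `ℂ`. -/
def stdC {N : ℕ} (a b : Fin N) : Matrix (Fin N) (Fin N) ℂ := single a b 1

open Fin.NatCast in
/-- The Hermitian zero-row-sum hopping matrices
`Q^{j,α} = i(E_{j,j+α} − E_{j+α,j}) − i ∑_{n=1}^α (E_{j+n−1,j+n} − E_{j+n,j+n−1})`
(indices mod `N`). -/
def Qmat (N : ℕ) [NeZero N] (j : Fin N) (α : ℕ) : Matrix (Fin N) (Fin N) ℂ :=
  Complex.I • (stdC j (j + (α : Fin N)) - stdC (j + (α : Fin N)) j)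
    - Complex.I •
        ∑ n ∈ Finset.Icc 1 α,
          (stdC (j + ((n - 1 : ℕ) : Fin N)) (j + ((n : ℕ) : Fin N))
            - stdC (j + ((n : ℕ) : Fin N)) (j + ((n - 1 : ℕ) : Fin N)))

/-- The nearest-neighbor pure-imaginary cyclic hopping matrix
`A_NN = i ∑_j (E_{j,j+1} − E_{j+1,j})`. -/
def Ann (N : ℕ) [NeZero N] : Matrix (Fin N) (Fin N) ℂ :=
  Complex.I • ∑ j : Fin N, (stdC j (j + 1) - stdC (j + 1) j)

open Fin.NatCast Fin.CommRing

/-! ### Auxiliary lemmas -/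

lemma stdC_apply {N : ℕ} (a b i l : Fin N) :
    stdC a b i l = if a = i ∧ b = l then 1 else 0 := by
  simp [stdC, Matrix.single_apply]

lemma sum_stdC_row {N : ℕ} (a b i : Fin N) :
    ∑ l, stdC a b i l = if a = i then 1 else 0 := by
  simp only [stdC_apply]
  by_cases h : a = i
  · simp [h]
  · simp [h]

lemma stdC_conjT {N : ℕ} (a b : Fin N) : (stdC a b)ᴴ = stdC b a := by
  ext i l
  simp only [conjTranspose_apply, stdC_apply, and_comm]
  split <;> simp

lemma herm_block {N : ℕ} (a b : Fin N) :
    (Complex.I • (stdC a b - stdC b a)).IsHermitian := by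
  unfold Matrix.IsHermitian
  rw [conjTranspose_smul, conjTranspose_sub, stdC_conjT, stdC_conjT]
  simp [smul_sub]
  abel

lemma Qmat_herm (N : ℕ) [NeZero N] (j : Fin N) (α : ℕ) : (Qmat N j α).IsHermitian := by
  have h1 := herm_block j (j + (α : Fin N))
  have h2 : (Complex.I • ∑ n ∈ Finset.Icc 1 α,
      (stdC (j + ((n - 1 : ℕ) : Fin N)) (j + ((n : ℕ) : Fin N))
        - stdC (j + ((n : ℕ) : Fin N)) (j + ((n - 1 : ℕ) : Fin N)))).IsHermitian := by
    rw [Finset.smul_sum]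
    unfold Matrix.IsHermitian
    rw [conjTranspose_sum]
    exact Finset.sum_congr rfl fun n _ => herm_block _ _
  exact h1.sub h2

lemma telescope {N : ℕ} [NeZero N] (j i : Fin N) (α : ℕ) :
    ∑ n ∈ Finset.Icc 1 α,
      ((if j + ((n - 1 : ℕ) : Fin N) = i then (1:ℂ) else 0)
        - (if j + ((n : ℕ) : Fin N) = i then (1:ℂ) else 0))
    = (if j = i then (1:ℂ) else 0) - (if j + (α : Fin N) = i then (1:ℂ) else 0) := by
  have key := Finset.sum_range_sub'
    (f := fun n : ℕ => (if j + ((n : ℕ) : Fin N) = i then (1:ℂ) else 0)) α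
  rw [show Finset.Icc 1 α = Finset.Ico 1 (α+1) by rfl, Finset.sum_Ico_eq_sum_range]
  simp only [Nat.add_sub_cancel, Nat.add_sub_cancel_left, add_comm 1]
  simpa using key

lemma Qmat_rowsum (N : ℕ) [NeZero N] (j : Fin N) (α : ℕ) (i : Fin N) :
    ∑ l, Qmat N j α i l = 0 := by
  have hsum : ∀ l, Qmat N j α i l =
      Complex.I * (stdC j (j + (α : Fin N)) i l - stdC (j + (α : Fin N)) j i l)
      - Complex.I * ∑ n ∈ Finset.Icc 1 α,
          ((stdC (j + ((n - 1 : ℕ) : Fin N)) (j + ((n : ℕ) : Fin N)) i l)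
            - stdC (j + ((n : ℕ) : Fin N)) (j + ((n - 1 : ℕ) : Fin N)) i l) := by
    intro l
    simp [Qmat, Matrix.sub_apply, Matrix.smul_apply, smul_eq_mul, Matrix.sum_apply]
  simp only [hsum]
  rw [Finset.sum_sub_distrib, ← Finset.mul_sum, ← Finset.mul_sum,
    Finset.sum_sub_distrib, sum_stdC_row, sum_stdC_row, Finset.sum_comm]
  have : ∀ n ∈ Finset.Icc 1 α,
      (∑ l, ((stdC (j + ((n - 1 : ℕ) : Fin N)) (j + ((n : ℕ) : Fin N)) i l)
            - stdC (j + ((n : ℕ) : Fin N)) (j + ((n - 1 : ℕ) : Fin N)) i l))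
      = ((if j + ((n - 1 : ℕ) : Fin N) = i then (1:ℂ) else 0)
        - (if j + ((n : ℕ) : Fin N) = i then (1:ℂ) else 0)) := by
    intro n _
    rw [Finset.sum_sub_distrib, sum_stdC_row, sum_stdC_row]
  rw [Finset.sum_congr rfl this, telescope]
  ring

lemma Qmat_one (N : ℕ) [NeZero N] (j : Fin N) : Qmat N j 1 = 0 := by
  simp [Qmat]

/-- the raw hopping `B_{j,α} = i(E_{j,j+α} - E_{j+α,j})`. -/
def Bmat (N : ℕ) [NeZero N] (j : Fin N) (α : ℕ) : Matrix (Fin N) (Fin N) ℂ :=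
  Complex.I • (stdC j (j + (α : Fin N)) - stdC (j + (α : Fin N)) j)

lemma Qmat_add_NN (N : ℕ) [NeZero N] (j : Fin N) (α : ℕ) :
    Qmat N j α + Complex.I •
        ∑ n ∈ Finset.Icc 1 α,
          (stdC (j + ((n - 1 : ℕ) : Fin N)) (j + ((n : ℕ) : Fin N))
            - stdC (j + ((n : ℕ) : Fin N)) (j + ((n - 1 : ℕ) : Fin N)))
      = Bmat N j α := by
  rw [Qmat, Bmat, sub_add_cancel]

lemma Bmat_apply (N : ℕ) [NeZero N] (j : Fin N) (α : ℕ) (p q : Fin N) :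
    Bmat N j α p q =
      Complex.I * ((if j = p ∧ j + (α : Fin N) = q then 1 else 0)
        - (if j + (α : Fin N) = p ∧ j = q then 1 else 0)) := by
  simp [Bmat, stdC_apply, Matrix.smul_apply, Matrix.sub_apply]

lemma cast_ne_zero_of_Icc {N : ℕ} [NeZero N] {α : ℕ} (h : α ∈ Finset.Icc 1 (N-1)) :
    ((α : Fin N) ≠ 0) ∧ (α : Fin N).val = α := by
  have hN : 0 < N := Nat.pos_of_ne_zero (NeZero.ne N)
  rw [Finset.mem_Icc] at h
  have hlt : α < N := by omega
  have hv : ((α : Fin N)).val = α := Fin.val_cast_of_lt hlt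
  constructor
  · intro h0
    rw [h0] at hv
    simp at hv
    omega
  · exact hv

lemma main_identity (N : ℕ) [NeZero N] (hN : 2 ≤ N)
    (c : Matrix (Fin N) (Fin N) ℂ)
    (hherm : c.IsHermitian) (him : ∀ j k, (c j k).re = 0) :
    c = ∑ j : Fin N, ∑ α ∈ Finset.Icc 1 (N-1),
        ((((c j (j + (α : Fin N))).im / 2 : ℝ)) : ℂ) • Bmat N j α := by
  have hsym : ∀ p q : Fin N, (c q p).im = -(c p q).im := by
    intro p q
    have := congrFun (congrFun hherm p) q
    rw [conjTranspose_apply] at this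
    have him' := congrArg Complex.im this
    simp only [Complex.star_def, Complex.conj_im] at him'
    linarith
  ext p q
  rw [Matrix.sum_apply]
  simp only [Matrix.sum_apply, Matrix.smul_apply, Bmat_apply, smul_eq_mul]
  by_cases hpq : p = q
  · subst hpq
    have hz : ∀ j : Fin N, ∀ α ∈ Finset.Icc 1 (N-1),
        (↑((c j (j + (α : Fin N))).im / 2) : ℂ) *
          (Complex.I * ((if j = p ∧ j + (α : Fin N) = p then 1 else 0)
            - (if j + (α : Fin N) = p ∧ j = p then 1 else 0))) = 0 := by
      intro j α hα
      obtain ⟨hne, _⟩ := cast_ne_zero_of_Icc hα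
      have h1 : ¬(j = p ∧ j + (α : Fin N) = p) := by
        rintro ⟨rfl, h⟩
        exact hne (by rwa [add_eq_left] at h)
      have h2 : ¬(j + (α : Fin N) = p ∧ j = p) := by
        rintro ⟨h, rfl⟩
        exact hne (by rwa [add_eq_left] at h)
      rw [if_neg h1, if_neg h2]
      ring
    rw [Finset.sum_congr rfl (fun j _ => Finset.sum_eq_zero (hz j)), Finset.sum_const_zero]
    have h1 := hsym p p
    have h2 := him p p
    have : c p p = 0 := by
      apply Complex.ext <;> simp [h2]
      linarith
    rw [this]
  · -- off-diagonal
    have hN0 : 0 < N := Nat.pos_of_ne_zero (NeZero.ne N)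
    have hvmem : ∀ {x y : Fin N}, x ≠ y → (y - x).val ∈ Finset.Icc 1 (N-1) := by
      intro x y hxy
      have h0 : y - x ≠ 0 := sub_ne_zero_of_ne (Ne.symm hxy)
      have h0' : (y - x).val ≠ 0 := by
        intro h; exact h0 (Fin.ext (by simp [h]))
      have hlt := (y - x).is_lt
      rw [Finset.mem_Icc]; omega
    have hcond : ∀ {x y : Fin N} (α : ℕ), α ∈ Finset.Icc 1 (N-1) → x ≠ y →
        ((x + (α : Fin N) = y) ↔ α = (y - x).val) := by
      intro x y α hα hxy
      obtain ⟨hne, hval⟩ := cast_ne_zero_of_Icc hα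
      constructor
      · intro h
        have : (α : Fin N) = y - x := by rw [← h]; ring
        rw [← hval, this]
      · intro h
        subst h
        rw [Fin.cast_val_eq_self]
        ring
    have hsplit : ∀ (j : Fin N) (α : ℕ),
        (↑((c j (j + (α : Fin N))).im / 2) : ℂ) *
          (Complex.I * ((if j = p ∧ j + (α : Fin N) = q then 1 else 0)
            - (if j + (α : Fin N) = p ∧ j = q then 1 else 0)))
        = (↑((c j (j + (α : Fin N))).im / 2) : ℂ) *
            (Complex.I * (if j = p ∧ j + (α : Fin N) = q then 1 else 0))
          - (↑((c j (j + (α : Fin N))).im / 2) : ℂ) *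
            (Complex.I * (if j + (α : Fin N) = p ∧ j = q then 1 else 0)) := by
      intro j α; ring
    simp only [hsplit, Finset.sum_sub_distrib]
    have hS1 : (∑ j : Fin N, ∑ α ∈ Finset.Icc 1 (N-1),
        (↑((c j (j + (α : Fin N))).im / 2) : ℂ) *
          (Complex.I * (if j = p ∧ j + (α : Fin N) = q then 1 else 0)))
        = (↑((c p q).im / 2) : ℂ) * Complex.I := by
      rw [Finset.sum_eq_single p]
      · rw [Finset.sum_eq_single ((q - p).val)]
        · have hmem := hvmem hpq
          have h1 : p + (((q - p).val : ℕ) : Fin N) = q := (hcond _ hmem hpq).mpr rfl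
          rw [if_pos ⟨rfl, h1⟩, h1]
          ring
        · intro α hα hne
          have : ¬(p = p ∧ p + (α : Fin N) = q) := by
            rintro ⟨-, h⟩
            exact hne ((hcond α hα hpq).mp h)
          rw [if_neg this]; ring
        · intro h
          exact absurd (hvmem hpq) h
      · intro j _ hj
        apply Finset.sum_eq_zero
        intro α _
        rw [if_neg (by rintro ⟨rfl, -⟩; exact hj rfl)]
        ring
      · intro h; exact absurd (Finset.mem_univ p) h
    have hS2 : (∑ j : Fin N, ∑ α ∈ Finset.Icc 1 (N-1),
        (↑((c j (j + (α : Fin N))).im / 2) : ℂ) *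
          (Complex.I * (if j + (α : Fin N) = p ∧ j = q then 1 else 0)))
        = (↑((c q p).im / 2) : ℂ) * Complex.I := by
      have hqp : q ≠ p := Ne.symm hpq
      rw [Finset.sum_eq_single q]
      · rw [Finset.sum_eq_single ((p - q).val)]
        · have hmem := hvmem hqp
          have h1 : q + (((p - q).val : ℕ) : Fin N) = p := (hcond _ hmem hqp).mpr rfl
          rw [if_pos ⟨h1, rfl⟩, h1]
          ring
        · intro α hα hne
          have : ¬(q + (α : Fin N) = p ∧ q = q) := by
            rintro ⟨h, -⟩
            exact hne ((hcond α hα hqp).mp h)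
          rw [if_neg this]; ring
        · intro h
          exact absurd (hvmem hqp) h
      · intro j _ hj
        apply Finset.sum_eq_zero
        intro α _
        rw [if_neg (by rintro ⟨-, rfl⟩; exact hj rfl)]
        ring
      · intro h; exact absurd (Finset.mem_univ q) h
    rw [hS1, hS2]
    have hcim : c p q = ((c p q).im : ℂ) * Complex.I := by
      apply Complex.ext <;> simp [him p q]
    have hval : (↑((c p q).im / 2) : ℂ) * Complex.I - (↑(-(c p q).im / 2) : ℂ) * Complex.I
        = ((c p q).im : ℂ) * Complex.I := by
      push_cast; ring
    rw [hsym p q, hval, ← hcim]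

def Dmat (N : ℕ) [NeZero N] (p : Fin N) : Matrix (Fin N) (Fin N) ℂ :=
  Complex.I • (stdC p (p + 1) - stdC (p + 1) p)

lemma real_smul_mat {N : ℕ} (r : ℝ) (M : Matrix (Fin N) (Fin N) ℂ) :
    r • M = (r : ℂ) • M := by
  ext i j
  simp [Matrix.smul_apply, Complex.real_smul]

lemma Dmat_rowsum {N : ℕ} [NeZero N] (p i : Fin N) :
    ∑ q, Dmat N p i q = Complex.I * ((if p = i then 1 else 0) - (if p + 1 = i then 1 else 0)) := by
  have : ∀ q, Dmat N p i q = Complex.I * (stdC p (p+1) i q - stdC (p+1) p i q) := by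
    intro q; simp [Dmat, Matrix.smul_apply, Matrix.sub_apply]
  simp only [this]
  rw [← Finset.mul_sum, Finset.sum_sub_distrib, sum_stdC_row, sum_stdC_row]

lemma sum_Dmat {N : ℕ} [NeZero N] : ∑ p : Fin N, Dmat N p = Ann N := by
  rw [Ann, Finset.smul_sum]
  rfl

lemma NN_eq_sum_D (N : ℕ) [NeZero N] (j : Fin N) (α : ℕ) :
    Complex.I • ∑ n ∈ Finset.Icc 1 α,
        (stdC (j + ((n - 1 : ℕ) : Fin N)) (j + ((n : ℕ) : Fin N))
          - stdC (j + ((n : ℕ) : Fin N)) (j + ((n - 1 : ℕ) : Fin N)))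
      = ∑ n ∈ Finset.Icc 1 α, Dmat N (j + ((n - 1 : ℕ) : Fin N)) := by
  rw [Finset.smul_sum]
  refine Finset.sum_congr rfl fun n hn => ?_
  have hn1 : 1 ≤ n := (Finset.mem_Icc.mp hn).1
  have hstep : j + ((n : ℕ) : Fin N) = j + ((n - 1 : ℕ) : Fin N) + 1 := by
    have : ((n : ℕ) : Fin N) = ((n - 1 : ℕ) : Fin N) + 1 := by
      conv_lhs => rw [show n = (n-1)+1 by omega]
      push_cast
      ring
    rw [this]; ring
  rw [Dmat, hstep]

lemma span_nn (N : ℕ) [NeZero N] (R : Matrix (Fin N) (Fin N) ℂ)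
    (hmem : R ∈ Submodule.span ℝ (Set.range (Dmat N)))
    (hrow : ∀ i, ∑ q, R i q = 0) :
    ∃ t : ℝ, R = (t : ℂ) • Ann N := by
  rw [Submodule.mem_span_range_iff_exists_fun] at hmem
  obtain ⟨r, hr⟩ := hmem
  have hstep : ∀ i : Fin N, r i = r (i - 1) := by
    intro i
    have h0 := hrow i
    rw [← hr] at h0
    have hexp : ∀ q, (∑ p : Fin N, r p • Dmat N p) i q
        = ∑ p : Fin N, (r p : ℂ) * Dmat N p i q := by
      intro q
      rw [Matrix.sum_apply]
      exact Finset.sum_congr rfl fun p _ => by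
        simp [Matrix.smul_apply, Complex.real_smul]
    rw [Finset.sum_congr rfl fun q _ => hexp q, Finset.sum_comm] at h0
    have h1 : ∀ p : Fin N, ∑ q, (r p : ℂ) * Dmat N p i q
        = (r p : ℂ) * (Complex.I * ((if p = i then 1 else 0) - (if p + 1 = i then 1 else 0))) := by
      intro p
      rw [← Finset.mul_sum, Dmat_rowsum]
    rw [Finset.sum_congr rfl fun p _ => h1 p] at h0
    have hsplit : ∀ p : Fin N,
        (r p : ℂ) * (Complex.I * ((if p = i then 1 else 0) - (if p + 1 = i then 1 else 0)))
        = (r p : ℂ) * Complex.I * (if p = i then 1 else 0)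
          - (r p : ℂ) * Complex.I * (if p + 1 = i then 1 else 0) := by
      intro p; ring
    rw [Finset.sum_congr rfl fun p _ => hsplit p, Finset.sum_sub_distrib] at h0
    have hA : ∑ p : Fin N, (r p : ℂ) * Complex.I * (if p = i then 1 else 0)
        = (r i : ℂ) * Complex.I := by
      rw [Finset.sum_eq_single i]
      · simp
      · intro p _ hp; rw [if_neg hp]; ring
      · intro h; exact absurd (Finset.mem_univ i) h
    have hB : ∑ p : Fin N, (r p : ℂ) * Complex.I * (if p + 1 = i then 1 else 0)
        = (r (i - 1) : ℂ) * Complex.I := by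
      rw [Finset.sum_eq_single (i - 1)]
      · rw [if_pos (by ring)]; ring
      · intro p _ hp
        rw [if_neg (fun h => hp (by rw [← h]; ring))]
        ring
      · intro h; exact absurd (Finset.mem_univ (i-1)) h
    rw [hA, hB] at h0
    have h2 : ((r i : ℂ) - (r (i-1) : ℂ)) * Complex.I = 0 := by rw [sub_mul]; exact h0
    rcases mul_eq_zero.mp h2 with h | h
    · exact_mod_cast sub_eq_zero.mp h
    · exact absurd h Complex.I_ne_zero
  have hconst : ∀ p : Fin N, r p = r 0 := by
    have hnat : ∀ k : ℕ, r (k : Fin N) = r 0 := by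
      intro k
      induction k with
      | zero => simp
      | succ k ih =>
        have := hstep ((k : Fin N) + 1)
        rw [add_sub_cancel_right] at this
        rw [show ((k+1 : ℕ) : Fin N) = (k : Fin N) + 1 by push_cast; ring, this, ih]
    intro p
    have := hnat p.val
    rwa [Fin.cast_val_eq_self] at this
  refine ⟨r 0, ?_⟩
  rw [← hr, ← sum_Dmat, Finset.smul_sum]
  exact Finset.sum_congr rfl fun p _ => by rw [hconst p, real_smul_mat]

/-- Each `Q^{j,α}` (`α ≥ 2`) is Hermitian with all row sums zero and
annihilates the all-ones vector; and every purely imaginary Hermitian cyclic hopping matrix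
with all row sums zero is a real multiple of `A_NN` plus a real combination of the
`Q^{j,α}` (hence the quotient by their span is at most one-dimensional, spanned by
`A_NN`). -/
theorem imaginary_hopping_decomposition (N : ℕ) [NeZero N] (hN : 2 ≤ N)
    (c : Matrix (Fin N) (Fin N) ℂ)
    (hherm : c.IsHermitian) (him : ∀ j k, (c j k).re = 0)
    (hrow : ∀ j, ∑ k, c j k = 0) :
    (∀ (j : Fin N) (α : ℕ), 2 ≤ α →
        (Qmat N j α).IsHermitian
          ∧ (∀ i, ∑ l, Qmat N j α i l = 0)
          ∧ Qmat N j α *ᵥ (fun _ => (1 : ℂ)) = 0)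
      ∧ ∃ (t : ℝ) (coef : Fin N → ℕ → ℝ),
          c = (t : ℂ) • Ann N
              + ∑ j : Fin N, ∑ α ∈ Finset.Icc 2 N, (coef j α : ℂ) • Qmat N j α := by
  constructor
  · intro j α _
    refine ⟨Qmat_herm N j α, Qmat_rowsum N j α, ?_⟩
    funext i
    simp only [Matrix.mulVec, dotProduct, mul_one]
    exact Qmat_rowsum N j α i
  · -- the decomposition
    set x : Fin N → ℕ → ℝ := fun j α => (c j (j + (α : Fin N))).im / 2 with hx
    set Qsum : Matrix (Fin N) (Fin N) ℂ :=
      ∑ j : Fin N, ∑ α ∈ Finset.Icc 1 (N-1), ((x j α : ℝ) : ℂ) • Qmat N j α with hQsum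
    set R : Matrix (Fin N) (Fin N) ℂ :=
      ∑ j : Fin N, ∑ α ∈ Finset.Icc 1 (N-1), ((x j α : ℝ) : ℂ) •
        (Complex.I • ∑ n ∈ Finset.Icc 1 α,
          (stdC (j + ((n - 1 : ℕ) : Fin N)) (j + ((n : ℕ) : Fin N))
            - stdC (j + ((n : ℕ) : Fin N)) (j + ((n - 1 : ℕ) : Fin N)))) with hR
    have hdecomp : c = Qsum + R := by
      rw [main_identity N hN c hherm him, hQsum, hR, ← Finset.sum_add_distrib]
      refine Finset.sum_congr rfl fun j _ => ?_
      rw [← Finset.sum_add_distrib]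
      refine Finset.sum_congr rfl fun α _ => ?_
      rw [← smul_add, Qmat_add_NN]
    -- R is in the real span of the nearest-neighbor bonds
    have hRmem : R ∈ Submodule.span ℝ (Set.range (Dmat N)) := by
      rw [hR]
      refine Submodule.sum_mem _ fun j _ => Submodule.sum_mem _ fun α _ => ?_
      rw [← real_smul_mat]
      refine Submodule.smul_mem _ _ ?_
      rw [NN_eq_sum_D]
      exact Submodule.sum_mem _ fun n _ =>
        Submodule.subset_span ⟨j + ((n - 1 : ℕ) : Fin N), rfl⟩
    -- R has zero row sums
    have hQsumrow : ∀ i, ∑ q, Qsum i q = 0 := by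
      intro i
      rw [hQsum]
      simp only [Matrix.sum_apply, Matrix.smul_apply, smul_eq_mul]
      rw [Finset.sum_comm]
      refine Finset.sum_eq_zero fun j _ => ?_
      rw [Finset.sum_comm]
      refine Finset.sum_eq_zero fun α _ => ?_
      rw [← Finset.mul_sum, Qmat_rowsum, mul_zero]
    have hRrow : ∀ i, ∑ q, R i q = 0 := by
      intro i
      have : ∀ q, R i q = c i q - Qsum i q := by
        intro q
        have := congrFun (congrFun hdecomp i) q
        simp only [Matrix.add_apply] at this
        rw [this]; ring
      rw [Finset.sum_congr rfl fun q _ => this q, Finset.sum_sub_distrib,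
        hrow i, hQsumrow i, sub_zero]
    obtain ⟨t, ht⟩ := span_nn N R hRmem hRrow
    refine ⟨t, fun j α => if α ≤ N - 1 then x j α else 0, ?_⟩
    have hcoef : ∀ j : Fin N,
        ∑ α ∈ Finset.Icc 2 N, (((if α ≤ N - 1 then x j α else 0 : ℝ)) : ℂ) • Qmat N j α
        = ∑ α ∈ Finset.Icc 1 (N-1), ((x j α : ℝ) : ℂ) • Qmat N j α := by
      intro j
      have hsub1 : Finset.Icc 2 (N-1) ⊆ Finset.Icc 2 N := by
        apply Finset.Icc_subset_Icc_right; omega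
      have hsub2 : Finset.Icc 2 (N-1) ⊆ Finset.Icc 1 (N-1) := by
        apply Finset.Icc_subset_Icc_left; omega
      rw [← Finset.sum_subset hsub1, ← Finset.sum_subset hsub2]
      · refine Finset.sum_congr rfl fun α hα => ?_
        rw [Finset.mem_Icc] at hα
        rw [if_pos hα.2]
      · intro α hα hα'
        rw [Finset.mem_Icc] at hα
        rw [Finset.mem_Icc] at hα'
        have : α = 1 := by omega
        rw [this, Qmat_one, smul_zero]
      · intro α hα hα'
        rw [Finset.mem_Icc] at hα
        rw [Finset.mem_Icc] at hα'
        rw [if_neg (by omega), Complex.ofReal_zero, zero_smul]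
    rw [Finset.sum_congr rfl fun j _ => hcoef j, ← hQsum, ← ht, hdecomp]
    exact add_comm _ _

end
end
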